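/- For the A_{2n}^{(1)} system, the coordinate change q_i = f_{2i}, p_i = f_1 + f_3 + ... + f_{2i-1} (i = 1,...,n), x = f_0 + f_1 + ... + f_{2n} is invertible, with inverse f_0 = x - q_1 - ... - q_n - p_n, f_{2i} = q_i, f_1 = p_1, f_{2i+1} = p_{i+1} - p_i (1 ≤ i ≤ n-1), and the new coordinates satisfy {p_i, q_j} = δ_{ij}, {q_i, q_j} = {p_i, p_j} = {p_i, x} = {q_i, x} = 0 with respect to the Poisson bracket {φ,ψ} = Σ (∂φ/∂f_i) u_{ij} (∂ψ/∂f_j), u_{i,i±1} = ±1 (indices mod 2n+1). -/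

import Mathlib

open MvPolynomial
open Fin.NatCast

noncomputable section

/-- The ring `ℂ(α)[f₀,…,f_{2n}]`: polynomials in the `f` variables over the field
`ℂ(α₀,…,α_{2n})` of rational functions in the parameters. -/
abbrev Rn (n : ℕ) : Type :=
  MvPolynomial (Fin (2*n+1)) (FractionRing (MvPolynomial (Fin (2*n+1)) ℂ))

def fn (n : ℕ) (i : Fin (2*n+1)) : Rn n := X i

/-- The matrix `U` mod `2n+1`. -/
def un (n : ℕ) (i j : Fin (2*n+1)) : Rn n :=
  if j = i + 1 then 1 else if j = i - 1 then -1 else 0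

/-- The Poisson bracket `{φ,ψ} = Σ_{i,j} (∂φ/∂f_i) u_{ij} (∂ψ/∂f_j)`. -/
def pbn (n : ℕ) (φ ψ : Rn n) : Rn n :=
  ∑ i : Fin (2*n+1), ∑ j : Fin (2*n+1), pderiv i φ * un n i j * pderiv j ψ

/-- `q_i = f_{2i}` (`i = 1,…,n`, encoded 0-based). -/
def qn (n : ℕ) (i : Fin n) : Rn n := fn n ((2*i.val+2 : ℕ) : Fin (2*n+1))

/-- `p_i = f₁ + f₃ + ⋯ + f_{2i-1}` (`i = 1,…,n`, encoded 0-based). -/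
def pn (n : ℕ) (i : Fin n) : Rn n :=
  ∑ r ∈ Finset.range (i.val+1), fn n ((2*r+1 : ℕ) : Fin (2*n+1))

/-- `x = f₀ + f₁ + ⋯ + f_{2n}`. -/
def xn (n : ℕ) : Rn n := ∑ i : Fin (2*n+1), fn n i

/- ### Auxiliary lemmas -/

lemma mod2' {m a : ℕ} (hm : 0 < m) (ha : a < 2*m) : a % m = if a < m then a else a - m := by
  split_ifs with h
  · exact Nat.mod_eq_of_lt h
  · rw [Nat.mod_eq_sub_mod (le_of_not_gt h), Nat.mod_eq_of_lt (by omega)]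

lemma castFin_eq (m a b : ℕ) [NeZero m] (ha : a < 2*m) (hb : b < 2*m) :
    ((a : Fin m) = (b : Fin m)) ↔ (a = b ∨ a + m = b ∨ b + m = a) := by
  have hm : 0 < m := Nat.pos_of_ne_zero (NeZero.ne m)
  rw [Fin.ext_iff, Fin.val_natCast, Fin.val_natCast, mod2' hm ha, mod2' hm hb]
  split_ifs <;> omega

lemma un_eval (n a b : ℕ) (hn : 1 ≤ n) (ha : a ≤ 2*n+1) (hb : b ≤ 2*n+1) :
    un n (a : Fin (2*n+1)) (b : Fin (2*n+1)) =
      if (b = a+1 ∨ b + (2*n+1) = a+1 ∨ (a+1) + (2*n+1) = b) then 1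
      else if (b+1 = a ∨ (b+1) + (2*n+1) = a ∨ a + (2*n+1) = b+1) then -1 else 0 := by
  have h1 : ((a : Fin (2*n+1)) + 1) = ((a+1 : ℕ) : Fin (2*n+1)) := by push_cast; ring
  have h2 : ((b : Fin (2*n+1)) = (a : Fin (2*n+1)) - 1) ↔
      (((b+1 : ℕ) : Fin (2*n+1)) = (a : Fin (2*n+1))) := by
    rw [eq_sub_iff_add_eq]; push_cast; ring_nf
  rw [un]
  simp only [h1, h2, castFin_eq (2*n+1) b (a+1) (by omega) (by omega),
    castFin_eq (2*n+1) (b+1) a (by omega) (by omega)]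

lemma pbn_XX (n : ℕ) (a b : Fin (2*n+1)) : pbn n (X a) (X b) = un n a b := by
  classical
  simp [pbn, Pi.single_apply, ite_mul, mul_ite, Finset.sum_ite_eq]

lemma pbn_sum_left {n : ℕ} {ι : Type*} (s : Finset ι) (φ : ι → Rn n) (ψ : Rn n) :
    pbn n (∑ a ∈ s, φ a) ψ = ∑ a ∈ s, pbn n (φ a) ψ := by
  unfold pbn
  simp only [map_sum, Finset.sum_mul]
  rw [Finset.sum_congr rfl (fun i _ => Finset.sum_comm), Finset.sum_comm]

lemma pbn_sum_right {n : ℕ} {ι : Type*} (s : Finset ι) (φ : Rn n) (ψ : ι → Rn n) :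
    pbn n φ (∑ a ∈ s, ψ a) = ∑ a ∈ s, pbn n φ (ψ a) := by
  unfold pbn
  simp only [map_sum, Finset.mul_sum]
  rw [Finset.sum_congr rfl (fun i _ => Finset.sum_comm), Finset.sum_comm]

lemma sum_un_zero (n : ℕ) (hn : 1 ≤ n) (a : Fin (2*n+1)) :
    ∑ j : Fin (2*n+1), un n a j = 0 := by
  have hne : a + 1 ≠ a - 1 := by
    intro h
    rw [sub_eq_add_neg] at h
    have h2 : (1 : Fin (2*n+1)) = -1 := add_left_cancel h
    have h3 : ((2:ℕ) : Fin (2*n+1)) = ((0:ℕ) : Fin (2*n+1)) := by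
      push_cast
      open Fin.CommRing in linear_combination h2
    rw [castFin_eq (2*n+1) 2 0 (by omega) (by omega)] at h3
    omega
  have key : ∀ j : Fin (2*n+1),
      un n a j = (if j = a+1 then (1:Rn n) else 0) + (if j = a-1 then -1 else 0) := by
    intro j
    rw [un]
    split_ifs with hA hB <;> first
      | (exact absurd (hA.symm.trans hB) hne)
      | ring1
  rw [Finset.sum_congr rfl fun j _ => key j, Finset.sum_add_distrib,
    Finset.sum_ite_eq' Finset.univ (a+1) (fun _ => (1:Rn n)),
    Finset.sum_ite_eq' Finset.univ (a-1) (fun _ => (-1:Rn n))]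
  simp

lemma sum_range_odd_even' {M : Type*} [AddCommMonoid M] (g : ℕ → M) (n : ℕ) :
    ∑ k ∈ Finset.range (2*n+1), g k =
      g 0 + (∑ r ∈ Finset.range n, g (2*r+1)) + ∑ r ∈ Finset.range n, g (2*r+2) := by
  induction n with
  | zero => simp
  | succ m ih =>
    rw [show 2*(m+1)+1 = (2*m+1)+1+1 by ring, Finset.sum_range_succ, Finset.sum_range_succ,
      ih, Finset.sum_range_succ (fun r => g (2*r+1)), Finset.sum_range_succ (fun r => g (2*r+2)),
      show (2*m+1)+1 = 2*m+2 by ring, show (2*m+1) = 2*m+1 by ring]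
    abel

/-- The coordinate change `(f) ↦ (q; p; x)` is invertible, with the stated inverse, and
the new coordinates are canonical for the Poisson bracket. -/
theorem stmt16 (n : ℕ) (hn : 1 ≤ n) :
    (fn n 0 = xn n - (∑ i : Fin n, qn n i) - pn n ⟨n-1, by omega⟩) ∧
    (fn n 1 = pn n ⟨0, by omega⟩) ∧
    (∀ i : Fin n, fn n ((2*i.val+2 : ℕ) : Fin (2*n+1)) = qn n i) ∧
    (∀ i : ℕ, ∀ h : i + 1 < n,
      fn n ((2*i+3 : ℕ) : Fin (2*n+1)) = pn n ⟨i+1, h⟩ - pn n ⟨i, by omega⟩) ∧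
    (∀ i j : Fin n, pbn n (pn n i) (qn n j) = if i = j then 1 else 0) ∧
    (∀ i j : Fin n, pbn n (qn n i) (qn n j) = 0) ∧
    (∀ i j : Fin n, pbn n (pn n i) (pn n j) = 0) ∧
    (∀ i : Fin n, pbn n (pn n i) (xn n) = 0) ∧
    (∀ i : Fin n, pbn n (qn n i) (xn n) = 0) := by
  refine ⟨?_, ?_, ?_, ?_, ?_, ?_, ?_, ?_, ?_⟩
  · -- f₀ = x - Σq - pₙ
    have hxn : xn n = ∑ k ∈ Finset.range (2*n+1), fn n ((k : ℕ) : Fin (2*n+1)) := by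
      rw [xn, Finset.sum_range fun k => fn n ((k : ℕ) : Fin (2*n+1))]
      simp [Fin.cast_val_eq_self]
    have splitsum := sum_range_odd_even' (fun k => fn n ((k : ℕ) : Fin (2*n+1))) n
    have hq : (∑ i : Fin n, qn n i)
        = ∑ r ∈ Finset.range n, fn n ((2*r+2 : ℕ) : Fin (2*n+1)) := by
      rw [Finset.sum_range fun r => fn n ((2*r+2 : ℕ) : Fin (2*n+1))]
      rfl
    have hp : pn n ⟨n-1, by omega⟩
        = ∑ r ∈ Finset.range n, fn n ((2*r+1 : ℕ) : Fin (2*n+1)) := by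
      show (∑ r ∈ Finset.range ((n-1)+1), fn n ((2*r+1 : ℕ) : Fin (2*n+1))) = _
      rw [show n-1+1 = n from by omega]
    rw [hxn, splitsum, hq, hp]
    have h0 : ((0:ℕ) : Fin (2*n+1)) = 0 := by norm_num
    rw [h0]
    ring
  · rw [pn]
    simp [fn]
  · intro i; rfl
  · intro i h
    have e : ((2*i+3 : ℕ) : Fin (2*n+1)) = ((2*(i+1)+1 : ℕ) : Fin (2*n+1)) := by rw [show 2*i+3 = 2*(i+1)+1 by ring]
    rw [pn, pn]
    show fn n _ = (∑ r ∈ Finset.range ((i+1)+1), fn n ((2*r+1 : ℕ) : Fin (2*n+1)))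
      - ∑ r ∈ Finset.range (i+1), fn n ((2*r+1 : ℕ) : Fin (2*n+1))
    rw [Finset.sum_range_succ, add_sub_cancel_left, e]
  · intro i j
    have hi := i.isLt; have hj := j.isLt
    rw [pn, pbn_sum_left]
    have key : ∀ r ∈ Finset.range (i.val+1),
        pbn n (fn n ((2*r+1 : ℕ) : Fin (2*n+1))) (qn n j)
          = (if r = j.val then (1:Rn n) else if r = j.val+1 then -1 else 0) := by
      intro r hr
      simp only [Finset.mem_range] at hr
      rw [qn, fn, fn, pbn_XX, un_eval n (2*r+1) (2*j.val+2) hn (by omega) (by omega)]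
      split_ifs <;> first | rfl | (exfalso; omega)
    rw [Finset.sum_congr rfl key]
    have hs : ∀ r ∈ Finset.range (i.val+1),
        (if r = j.val then (1:Rn n) else if r = j.val+1 then -1 else 0)
          = (if r = j.val then (1:Rn n) else 0) + (if r = j.val+1 then -1 else 0) := by
      intro r _
      split_ifs <;> first | (exfalso; omega) | ring1
    rw [Finset.sum_congr rfl hs, Finset.sum_add_distrib,
      Finset.sum_ite_eq' (Finset.range (i.val+1)) j.val (fun _ => (1:Rn n)),
      Finset.sum_ite_eq' (Finset.range (i.val+1)) (j.val+1) (fun _ => (-1:Rn n))]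
    simp only [Finset.mem_range, Fin.ext_iff]
    split_ifs <;> first | (exfalso; omega) | ring1
  · intro i j
    have hi := i.isLt; have hj := j.isLt
    rw [qn, qn, fn, fn, pbn_XX,
      un_eval n (2*i.val+2) (2*j.val+2) hn (by omega) (by omega)]
    split_ifs <;> first | rfl | (exfalso; omega)
  · intro i j
    have hi := i.isLt; have hj := j.isLt
    rw [pn, pbn_sum_left]
    refine Finset.sum_eq_zero fun r hr => ?_
    simp only [Finset.mem_range] at hr
    rw [pn, pbn_sum_right]
    refine Finset.sum_eq_zero fun s hs => ?_
    simp only [Finset.mem_range] at hs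
    rw [fn, fn, pbn_XX, un_eval n (2*r+1) (2*s+1) hn (by omega) (by omega)]
    split_ifs <;> first | rfl | (exfalso; omega)
  · intro i
    rw [pn, pbn_sum_left]
    refine Finset.sum_eq_zero fun r hr => ?_
    rw [xn, pbn_sum_right]
    simp only [fn, pbn_XX]
    exact sum_un_zero n hn _
  · intro i
    rw [qn, xn, pbn_sum_right]
    simp only [fn, pbn_XX]
    exact sum_un_zero n hn _
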